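/- Let α > 0 and β ∈ (0, α + 1/2]. Let E be a standard exponential random variable independent of the iid standard normal sequence (Z_k)_{k≥1}, and for T > 0 set L = E^{1/2+α}/√T and W = (L k^{−1/2−α} Z_k)_{k≥1}. Then for every D > 0 there exist constants c, K > 0 and T0 > 0 such that for all T ≥ T0, taking ε_T = c T^{−β/(1+2β)} and R_T = K T^{(1/2+α−β)/(1+2β)}, one has P( W ∉ B_T ) ≤ 2 exp( −D T^{1/(1+2β)} ), where B_T = { (h_k + g_k)_{k≥1} : Σ_k h_k² k^{1+2α} ≤ R_T², Σ_k g_k² ≤ ε_T² }. -/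

import Mathlib

open MeasureTheory ProbabilityTheory Real Set
open scoped ENNReal NNReal


lemma gauss_density_smul (g : ℝ → ℝ) :
    ∫ x, g x ∂(gaussianReal 0 1) = ∫ x, gaussianPDFReal 0 1 x * g x := by
  rw [gaussianReal_of_var_ne_zero 0 one_ne_zero, gaussianPDF_def]
  rw [show (fun x => ENNReal.ofReal (gaussianPDFReal 0 1 x))
      = (fun x => ((gaussianPDFReal 0 1 x).toNNReal : ℝ≥0∞)) from rfl]
  rw [integral_withDensity_eq_integral_smul ((measurable_gaussianPDFReal 0 1).real_toNNReal)]
  congr 1; ext x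
  simp [NNReal.smul_def, Real.coe_toNNReal _ (gaussianPDFReal_nonneg 0 1 x)]

lemma gauss_prod {t : ℝ} (x : ℝ) :
    gaussianPDFReal 0 1 x * Real.exp (t * x^2)
      = (Real.sqrt (2*π))⁻¹ * Real.exp (-(1/2 - t) * x^2) := by
  rw [gaussianPDFReal]
  push_cast
  rw [mul_assoc, ← Real.exp_add]
  ring_nf

lemma gauss_int {t : ℝ} (ht : t < 1/2) :
    Integrable (fun x => Real.exp (t * x^2)) (gaussianReal 0 1) := by
  rw [gaussianReal_of_var_ne_zero 0 one_ne_zero, gaussianPDF_def]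
  rw [show (fun x => ENNReal.ofReal (gaussianPDFReal 0 1 x))
      = (fun x => ((gaussianPDFReal 0 1 x).toNNReal : ℝ≥0∞)) from rfl]
  rw [integrable_withDensity_iff_integrable_smul ((measurable_gaussianPDFReal 0 1).real_toNNReal)]
  have : (fun x => (gaussianPDFReal 0 1 x).toNNReal • Real.exp (t * x^2))
      = fun x => (Real.sqrt (2*π))⁻¹ * Real.exp (-(1/2 - t) * x^2) := by
    ext x
    rw [NNReal.smul_def, smul_eq_mul, Real.coe_toNNReal _ (gaussianPDFReal_nonneg 0 1 x),
      gauss_prod]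
  rw [this]
  exact (integrable_exp_neg_mul_sq (by linarith)).const_mul _

lemma gauss_val {t : ℝ} (ht0 : 0 ≤ t) (ht : t ≤ 1/4) :
    ∫ x, Real.exp (t * x^2) ∂(gaussianReal 0 1) ≤ Real.exp (2*t) := by
  rw [gauss_density_smul]
  have : (fun x => gaussianPDFReal 0 1 x * Real.exp (t * x^2))
      = fun x => (Real.sqrt (2*π))⁻¹ * Real.exp (-(1/2 - t) * x^2) := by
    ext x; exact gauss_prod x
  rw [this, integral_const_mul, integral_gaussian]
  have hb : (0:ℝ) < 1/2 - t := by linarith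
  have hpi := Real.pi_pos
  rw [inv_mul_eq_div, ← Real.sqrt_div (by positivity) (2*π)]
  have hq : (π / (1/2 - t)) / (2*π) = 1/(1 - 2*t) := by
    rw [div_div, div_eq_div_iff (by positivity) (by nlinarith)]
    ring
  rw [hq]
  rw [show Real.exp (2*t) = Real.sqrt (Real.exp (2*t)^2) from (Real.sqrt_sq (Real.exp_nonneg _)).symm]
  apply Real.sqrt_le_sqrt
  have he : 1 + 2*t ≤ Real.exp (2*t) := by linarith [Real.add_one_le_exp (2*t)]
  rw [div_le_iff₀ (by nlinarith), sq]
  nlinarith [mul_le_mul he he (by linarith) (Real.exp_nonneg (2*t)),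
    mul_nonneg (mul_nonneg ht0 ht0) ht0, sq_nonneg t]


lemma exp_sq_integrable {Ω : Type*} [MeasurableSpace Ω] {P : Measure Ω} {X : Ω → ℝ}
    (hX : Measurable X) (hlaw : Measure.map X P = gaussianReal 0 1) {t : ℝ} (ht : t < 1/2) :
    Integrable (fun ω => Real.exp (t * (X ω)^2)) P := by
  have h := gauss_int ht
  rw [← hlaw] at h
  exact (integrable_map_measure
    (Continuous.aestronglyMeasurable (by continuity)) hX.aemeasurable).mp h

lemma exp_sq_integral {Ω : Type*} [MeasurableSpace Ω] {P : Measure Ω} {X : Ω → ℝ}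
    (hX : Measurable X) (hlaw : Measure.map X P = gaussianReal 0 1) {t : ℝ}
    (ht0 : 0 ≤ t) (ht : t ≤ 1/4) :
    ∫ ω, Real.exp (t * (X ω)^2) ∂P ≤ Real.exp (2*t) := by
  have h := gauss_val ht0 ht
  rw [← hlaw, integral_map hX.aemeasurable
    (Continuous.aestronglyMeasurable (by continuity))] at h
  exact h

lemma chernoff {Ω : Type*} [MeasurableSpace Ω] (P : Measure Ω) [IsProbabilityMeasure P]
    (Z : ℕ → Ω → ℝ) (hmeas : ∀ k, Measurable (Z k))
    (hlaw : ∀ k, Measure.map (Z k) P = gaussianReal 0 1)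
    (hindep : iIndepFun Z P)
    (s : Finset ℕ) (a : ℕ → ℝ) (ha0 : ∀ k, 0 ≤ a k) (ha1 : ∀ k, a k ≤ 1/4) (u : ℝ) :
    P {ω | u ≤ ∑ k ∈ s, a k * (Z k ω)^2}
      ≤ ENNReal.ofReal (Real.exp (-u + 2 * ∑ k ∈ s, a k)) := by
  set X : ℕ → Ω → ℝ := fun k ω => a k * (Z k ω)^2 with hXdef
  have hXmeas : ∀ k, Measurable (X k) := fun k =>
    measurable_const.mul ((hmeas k).pow_const 2)
  have hXindep : iIndepFun X P :=
    hindep.comp (fun k (x : ℝ) => a k * x^2)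
      (fun k => measurable_const.mul (measurable_id.pow_const 2))
  have hint : ∀ k, Integrable (fun ω => Real.exp (1 * X k ω)) P := by
    intro k
    simp only [one_mul, hXdef]
    exact exp_sq_integrable (hmeas k) (hlaw k) (lt_of_le_of_lt (ha1 k) (by norm_num))
  have hmgf : ∀ k, mgf (X k) P 1 ≤ Real.exp (2 * a k) := by
    intro k
    rw [mgf]
    simp only [one_mul, hXdef]
    exact exp_sq_integral (hmeas k) (hlaw k) (ha0 k) (ha1 k)
  have hsum_int : Integrable (fun ω => Real.exp (1 * (∑ k ∈ s, X k) ω)) P :=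
    hXindep.integrable_exp_mul_sum hXmeas (fun i _ => hint i)
  have h := measure_ge_le_exp_mul_mgf (μ := P) (X := ∑ k ∈ s, X k) u zero_le_one hsum_int
  rw [hXindep.mgf_sum hXmeas s] at h
  have hprod : ∏ k ∈ s, mgf (X k) P 1 ≤ Real.exp (2 * ∑ k ∈ s, a k) := by
    rw [Finset.mul_sum, Real.exp_sum]
    exact Finset.prod_le_prod (fun i _ => mgf_nonneg) (fun i hi => hmgf i)
  have hset : {ω | u ≤ ∑ k ∈ s, a k * (Z k ω)^2} = {ω | u ≤ (∑ k ∈ s, X k) ω} := by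
    ext ω
    simp [hXdef, Finset.sum_apply]
  rw [hset, ENNReal.le_ofReal_iff_toReal_le (measure_ne_top P _) (Real.exp_nonneg _)]
  calc (P {ω | u ≤ (∑ k ∈ s, X k) ω}).toReal
      ≤ Real.exp (-1 * u) * ∏ k ∈ s, mgf (X k) P 1 := h
    _ ≤ Real.exp (-1 * u) * Real.exp (2 * ∑ k ∈ s, a k) :=
        mul_le_mul_of_nonneg_left hprod (Real.exp_nonneg _)
    _ = Real.exp (-u + 2 * ∑ k ∈ s, a k) := by rw [← Real.exp_add]; ring_nf


lemma exp_tail {Ω : Type*} [MeasurableSpace Ω] {P : Measure Ω} {E : Ω → ℝ}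
    (hEmeas : Measurable E) (hElaw : Measure.map E P = expMeasure 1) {s : ℝ} (hs : 0 ≤ s) :
    P {ω | s < E ω} ≤ ENNReal.ofReal (Real.exp (-s)) := by
  have hpre : {ω | s < E ω} = E ⁻¹' (Ioi s) := rfl
  rw [hpre, ← Measure.map_apply hEmeas measurableSet_Ioi, hElaw]
  rw [show expMeasure 1 = volume.withDensity (exponentialPDF 1) from rfl]
  rw [withDensity_apply _ measurableSet_Ioi]
  have hcong : ∀ x ∈ Ioi s, exponentialPDF 1 x = ENNReal.ofReal (Real.exp (-x)) := by
    intro x hx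
    rw [exponentialPDF_of_nonneg (le_of_lt (lt_of_le_of_lt hs hx))]
    norm_num
  rw [setLIntegral_congr_fun measurableSet_Ioi hcong]
  have hie : IntegrableOn (fun x => Real.exp (-x)) (Ioi s) := by
    have := exp_neg_integrableOn_Ioi s (zero_lt_one)
    simpa using this
  rw [← ofReal_integral_eq_lintegral_ofReal hie
    (ae_of_all _ (fun x => Real.exp_nonneg _))]
  rw [integral_exp_neg_Ioi]

lemma exp_neg_prob {Ω : Type*} [MeasurableSpace Ω] {P : Measure Ω} {E : Ω → ℝ}
    (hEmeas : Measurable E) (hElaw : Measure.map E P = expMeasure 1) :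
    P {ω | E ω < 0} = 0 := by
  have hpre : {ω | E ω < 0} = E ⁻¹' (Iio 0) := rfl
  rw [hpre, ← Measure.map_apply hEmeas measurableSet_Iio, hElaw]
  rw [show expMeasure 1 = volume.withDensity (exponentialPDF 1) from rfl]
  rw [withDensity_apply _ measurableSet_Iio]
  exact lintegral_exponentialPDF_of_nonpos (le_refl 0)

lemma per_term {p x : ℝ} (hp : 0 < p) (hx : 1 ≤ x) :
    p * (x+1)^(-(1+p)) ≤ x^(-p) - (x+1)^(-p) := by
  have hx0 : (0:ℝ) < x := lt_of_lt_of_le one_pos hx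
  have hx1 : (0:ℝ) < x + 1 := by linarith
  have hlog : 1/(x+1) ≤ Real.log ((x+1)/x) := by
    have h := Real.log_le_sub_one_of_pos (show (0:ℝ) < x/(x+1) by positivity)
    have he : (x+1)/x = (x/(x+1))⁻¹ := by field_simp
    rw [he, Real.log_inv]
    have h2 : x/(x+1) - 1 = -(1/(x+1)) := by field_simp; ring
    linarith [h2 ▸ h]
  have hkey : 1 + p/(x+1) ≤ ((x+1)/x)^p := by
    rw [Real.rpow_def_of_pos (by positivity)]
    have h1 := Real.add_one_le_exp (Real.log ((x+1)/x) * p)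
    have h2 : p/(x+1) ≤ Real.log ((x+1)/x) * p := by
      calc p/(x+1) = (1/(x+1)) * p := by ring
        _ ≤ Real.log ((x+1)/x) * p := mul_le_mul_of_nonneg_right hlog hp.le
    linarith
  have hA : (0:ℝ) < (x+1)^p := Real.rpow_pos_of_pos hx1 p
  have hB : (0:ℝ) < x^p := Real.rpow_pos_of_pos hx0 p
  have hdiv : ((x+1)/x)^p = (x+1)^p / x^p := Real.div_rpow hx1.le hx0.le p
  have h3 : x^p * (1 + p/(x+1)) ≤ (x+1)^p := by
    rw [hdiv] at hkey
    calc x^p * (1 + p/(x+1)) ≤ x^p * ((x+1)^p / x^p) :=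
          mul_le_mul_of_nonneg_left hkey hB.le
      _ = (x+1)^p := by field_simp
  rw [Real.rpow_neg hx0.le, Real.rpow_neg hx1.le, Real.rpow_neg hx1.le,
    Real.rpow_add hx1 1 p, Real.rpow_one]
  have e2 : (x^p)⁻¹ - ((x+1)^p)⁻¹ = ((x+1)^p - x^p)/(x^p*(x+1)^p) := by field_simp
  have e1 : p * ((x+1)*(x+1)^p)⁻¹ = p / ((x+1)*(x+1)^p) := by rw [div_eq_mul_inv]
  rw [e1, e2, div_le_div_iff₀ (by positivity) (by positivity)]
  have h4 : p*(x^p) ≤ ((x+1)^p - x^p)*(x+1) := by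
    have h5 : x^p * (p/(x+1)) * (x+1) = p * x^p := by field_simp
    have h6 : x^p * (p/(x+1)) ≤ (x+1)^p - x^p := by nlinarith [h3]
    have h7 := mul_le_mul_of_nonneg_right h6 hx1.le
    linarith
  nlinarith [h4, hA]

lemma tail_weight_sum {p : ℝ} (hp : 0 < p) (n : ℕ) (hn : 1 ≤ n) (s : Finset ℕ)
    (hs : ∀ k ∈ s, n ≤ k) :
    ∑ k ∈ s, ((k:ℝ)+1)^(-(1+p)) ≤ (n:ℝ)^(-p) / p := by
  set f : ℕ → ℝ := fun k => ((k:ℝ))^(-p) with hf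
  have hterm : ∀ k ∈ s, ((k:ℝ)+1)^(-(1+p)) ≤ (f k - f (k+1))/p := by
    intro k hk
    have h1k : (1:ℝ) ≤ (k:ℝ) := by exact_mod_cast le_trans hn (hs k hk)
    have h := per_term hp h1k
    rw [le_div_iff₀ hp]
    simp only [hf]
    push_cast
    linarith
  have htel : ∑ k ∈ s, (f k - f (k+1)) ≤ f n := by
    set m := s.sup id + 1 with hm
    have hsub : s ⊆ Finset.Ico n m := by
      intro k hk
      exact Finset.mem_Ico.mpr ⟨hs k hk, Nat.lt_succ_of_le (Finset.le_sup (f := id) hk)⟩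
    have hmono : ∀ k, 1 ≤ k → f (k+1) ≤ f k := by
      intro k hk
      have h1k : (1:ℝ) ≤ (k:ℝ) := by exact_mod_cast hk
      simp only [hf]
      push_cast
      apply Real.rpow_le_rpow_of_nonpos (by linarith) (by linarith) (by linarith)
    have hnonneg : ∀ k ∈ Finset.Ico n m, 0 ≤ f k - f (k+1) := by
      intro k hk
      have := hmono k (le_trans hn (Finset.mem_Ico.mp hk).1)
      linarith
    calc ∑ k ∈ s, (f k - f (k+1)) ≤ ∑ k ∈ Finset.Ico n m, (f k - f (k+1)) :=
          Finset.sum_le_sum_of_subset_of_nonneg hsub (fun k hk _ => hnonneg k hk)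
      _ = ∑ i ∈ Finset.range (m - n), (f (n+i) - f (n+(i+1))) := by
          rw [Finset.sum_Ico_eq_sum_range]
          exact Finset.sum_congr rfl (fun i _ => by ring_nf)
      _ = f (n+0) - f (n+(m-n)) := Finset.sum_range_sub' (fun i => f (n+i)) (m-n)
      _ ≤ f n := by
          simp only [Nat.add_zero]
          have : 0 ≤ f (n+(m-n)) := Real.rpow_nonneg (by positivity) _
          linarith
  calc ∑ k ∈ s, ((k:ℝ)+1)^(-(1+p)) ≤ ∑ k ∈ s, (f k - f (k+1))/p :=
        Finset.sum_le_sum hterm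
    _ = (∑ k ∈ s, (f k - f (k+1)))/p := by rw [Finset.sum_div]
    _ ≤ f n / p := by
        gcongr


lemma sq_rpow (y e : ℝ) (hy : 0 ≤ y) : (y^e)^2 = y^(2*e) := by
  rw [← Real.rpow_natCast (y^e) 2, ← Real.rpow_mul hy]
  norm_num [mul_comm]

lemma rpow_cancel {y : ℝ} (hy : 0 < y) (e : ℝ) : y^(-e) * y^e = 1 := by
  rw [← Real.rpow_add hy]
  simp

lemma xsq_eq {Eω Tv zk : ℝ} (hE : 0 ≤ Eω) (hT : 0 < Tv) (α : ℝ) (k : ℕ) :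
    (Eω^(1/2+α) / Real.sqrt Tv * ((k:ℝ)+1)^(-(1/2)-α) * zk)^2
      = Eω^(1+2*α)/Tv * (((k:ℝ)+1)^(-(1+2*α)) * zk^2) := by
  have hk : (0:ℝ) < (k:ℝ)+1 := by positivity
  rw [mul_pow, mul_pow, div_pow, sq_rpow Eω _ hE, sq_rpow _ _ hk.le, Real.sq_sqrt hT.le,
    show 2*(1/2+α) = 1+2*α by ring, show 2*(-(1/2)-α) = -(1+2*α) by ring]
  ring

set_option maxHeartbeats 4000000 in
/-- Remaining mass bound for the hierarchical prior with random scale `L = E^{1/2+α}/√T`: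
for every `D > 0` there are `c, K, T0 > 0` such that for all `T ≥ T0`, with
`ε_T = c T^{-β/(1+2β)}` and `R_T = K T^{(1/2+α-β)/(1+2β)}`,
`P(W ∉ B_T) ≤ 2 exp(-D T^{1/(1+2β)})`, where `B_T = R_T·H₁^{α+1/2} + ε_T·L²₁`. -/
theorem stmt_6 {Ω : Type*} [MeasurableSpace Ω] (P : Measure Ω) [IsProbabilityMeasure P]
    (Z : ℕ → Ω → ℝ) (hmeas : ∀ k, Measurable (Z k))
    (hlaw : ∀ k, Measure.map (Z k) P = gaussianReal 0 1)
    (hindep : iIndepFun Z P)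
    (E : Ω → ℝ) (hEmeas : Measurable E)
    (hElaw : Measure.map E P = expMeasure 1)
    (hEZ : IndepFun E (fun ω => fun k => Z k ω) P)
    (α β : ℝ) (hα : 0 < α) (hβ : 0 < β) (hβα : β ≤ α + 1/2) :
    ∀ D > 0, ∃ c > 0, ∃ K > 0, ∃ T0 > 0, ∀ T ≥ T0,
      P {ω | (fun k : ℕ =>
            (E ω)^(1/2+α) / Real.sqrt T * ((k:ℝ)+1)^(-(1/2)-α) * Z k ω) ∉
          {x : ℕ → ℝ | ∃ h g : ℕ → ℝ, (∀ k, x k = h k + g k) ∧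
            (Summable fun k => (h k)^2 * ((k:ℝ)+1)^(1+2*α)) ∧
            (∑' k : ℕ, (h k)^2 * ((k:ℝ)+1)^(1+2*α)) ≤ (K * T^((1/2+α-β)/(1+2*β)))^2 ∧
            (Summable fun k => (g k)^2) ∧
            (∑' k : ℕ, (g k)^2) ≤ (c * T^(-β/(1+2*β)))^2}}
        ≤ ENNReal.ofReal (2 * Real.exp (-D * T^(1/(1+2*β)))) := by
  intro D hD
  have hD1 : (0:ℝ) < D + 1 := by linarith
  set Cα : ℝ := (2:ℝ)^(2*α)/α with hCαdef
  have hCα : 0 < Cα := by positivity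
  have hcsq : (0:ℝ) < 4*(D+1)^(1+2*α)*(D+1+Cα) := by positivity
  have hKsq : (0:ℝ) < (D+1)^(1+2*α)*(4*D+12) := by positivity
  refine ⟨Real.sqrt (4*(D+1)^(1+2*α)*(D+1+Cα)), Real.sqrt_pos.mpr hcsq,
    Real.sqrt ((D+1)^(1+2*α)*(4*D+12)), Real.sqrt_pos.mpr hKsq, 1, one_pos, ?_⟩
  intro T hT
  have hT0 : (0:ℝ) < T := lt_of_lt_of_le one_pos hT
  have hβ2 : (0:ℝ) < 1+2*β := by linarith
  set A := T^(1/(1+2*β)) with hAdef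
  have hA1 : 1 ≤ A := by
    rw [hAdef]
    calc (1:ℝ) = 1^(1/(1+2*β)) := (Real.one_rpow _).symm
      _ ≤ T^(1/(1+2*β)) := Real.rpow_le_rpow (by norm_num) hT (by positivity)
  have hA0 : (0:ℝ) < A := by linarith
  set N := ⌈A⌉₊ with hNdef
  have hNA : A ≤ N := Nat.le_ceil A
  have hNA2 : (N:ℝ) ≤ A + 1 := le_of_lt (Nat.ceil_lt_add_one hA0.le)
  set lam : ℝ := ((N:ℝ)+2)^(1+2*α)/4 with hlamdef
  have hlam0 : 0 < lam := by positivity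
  set uu : ℝ := 4*(D+1+Cα) * A^(-(2*α)) with huudef
  have huu0 : 0 < uu := by positivity
  set aa : ℕ → ℝ := fun k => if k ≤ N then 0 else lam * ((k:ℝ)+1)^(-(1+2*α)) with haadef
  have haa0 : ∀ k, 0 ≤ aa k := by
    intro k
    rw [haadef]
    dsimp only
    split
    · exact le_refl 0
    · positivity
  have haa1 : ∀ k, aa k ≤ 1/4 := by
    intro k
    rw [haadef]
    dsimp only
    split
    · norm_num
    · rename_i hk
      push_neg at hk
      have hk1 : ((N:ℝ))+2 ≤ (k:ℝ)+1 := by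
        have : (N:ℝ)+1 ≤ (k:ℝ) := by exact_mod_cast hk
        linarith
      have h1 : ((k:ℝ)+1)^(-(1+2*α)) ≤ ((N:ℝ)+2)^(-(1+2*α)) :=
        Real.rpow_le_rpow_of_nonpos (by positivity) hk1 (by linarith)
      have h2 : lam * ((N:ℝ)+2)^(-(1+2*α)) = 1/4 := by
        rw [hlamdef, div_mul_eq_mul_div, mul_comm, rpow_cancel (by positivity)]
      calc lam * ((k:ℝ)+1)^(-(1+2*α)) ≤ lam * ((N:ℝ)+2)^(-(1+2*α)) :=
            mul_le_mul_of_nonneg_left h1 hlam0.le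
        _ = 1/4 := h2
  -- the four bad events
  set B1 : Set Ω := {ω | E ω < 0} with hB1def
  set B2 : Set Ω := {ω | (D+1)*A < E ω} with hB2def
  set B3 : Set Ω := {ω | (D+3)*A ≤ ∑ k ∈ Finset.range (N+1), (1/4) * (Z k ω)^2} with hB3def
  set B4 : Set Ω := ⋃ n, {ω | lam*uu ≤ ∑ k ∈ Finset.range n, aa k * (Z k ω)^2} with hB4def
  -- inclusion
  have hincl : {ω | (fun k : ℕ =>
            (E ω)^(1/2+α) / Real.sqrt T * ((k:ℝ)+1)^(-(1/2)-α) * Z k ω) ∉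
          {x : ℕ → ℝ | ∃ h g : ℕ → ℝ, (∀ k, x k = h k + g k) ∧
            (Summable fun k => (h k)^2 * ((k:ℝ)+1)^(1+2*α)) ∧
            (∑' k : ℕ, (h k)^2 * ((k:ℝ)+1)^(1+2*α)) ≤
              (Real.sqrt ((D+1)^(1+2*α)*(4*D+12)) * T^((1/2+α-β)/(1+2*β)))^2 ∧
            (Summable fun k => (g k)^2) ∧
            (∑' k : ℕ, (g k)^2) ≤
              (Real.sqrt (4*(D+1)^(1+2*α)*(D+1+Cα)) * T^(-β/(1+2*β)))^2}}
        ⊆ B1 ∪ B2 ∪ B3 ∪ B4 := by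
    intro ω hω
    by_contra hcon
    apply hω
    simp only [hB1def, hB2def, hB3def, hB4def, mem_union, not_or, mem_setOf_eq, mem_iUnion,
      not_exists, not_lt, not_le] at hcon
    obtain ⟨⟨⟨hE0, hEt⟩, hhead⟩, htail⟩ := hcon
    set x : ℕ → ℝ := fun k => (E ω)^(1/2+α)/Real.sqrt T * ((k:ℝ)+1)^(-(1/2)-α) * Z k ω
      with hxdef
    simp only [mem_setOf_eq]
    have hL0 : 0 ≤ (E ω)^(1+2*α)/T := by positivity
    have hLle : (E ω)^(1+2*α)/T ≤ ((D+1)*A)^(1+2*α)/T := by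
      have h := Real.rpow_le_rpow hE0 hEt (show (0:ℝ) ≤ 1+2*α by linarith)
      simp only [div_eq_mul_inv]
      exact mul_le_mul_of_nonneg_right h (by positivity)
    have hxsq : ∀ k, (x k)^2 = (E ω)^(1+2*α)/T * (((k:ℝ)+1)^(-(1+2*α)) * (Z k ω)^2) :=
      fun k => xsq_eq hE0 hT0 α k
    have hxsq2 : ∀ k, (x k)^2 * ((k:ℝ)+1)^(1+2*α) = (E ω)^(1+2*α)/T * (Z k ω)^2 := by
      intro k
      have hk : (0:ℝ) < (k:ℝ)+1 := by positivity
      calc (x k)^2 * ((k:ℝ)+1)^(1+2*α)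
          = (E ω)^(1+2*α)/T * (Z k ω)^2 * (((k:ℝ)+1)^(-(1+2*α)) * ((k:ℝ)+1)^(1+2*α)) := by
            rw [hxsq k]; ring
        _ = (E ω)^(1+2*α)/T * (Z k ω)^2 := by rw [rpow_cancel hk, mul_one]
    refine ⟨fun k => if k ≤ N then x k else 0, fun k => if k ≤ N then 0 else x k,
      ?_, ?_, ?_, ?_, ?_⟩
    · intro k
      by_cases hk : k ≤ N <;> simp [hk]
    · apply summable_of_ne_finset_zero (s := Finset.range (N+1))
      intro k hk
      have hkN : ¬ k ≤ N := by simpa [Finset.mem_range, Nat.lt_succ_iff] using hk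
      simp [hkN]
    · have hts : (∑' k, (if k ≤ N then x k else 0)^2 * ((k:ℝ)+1)^(1+2*α))
          = ∑ k ∈ Finset.range (N+1), (E ω)^(1+2*α)/T * (Z k ω)^2 := by
        rw [tsum_eq_sum (s := Finset.range (N+1)) (f := fun k =>
            (if k ≤ N then x k else 0)^2 * ((k:ℝ)+1)^(1+2*α)) (fun k hk => by
          have hkN : ¬ k ≤ N := by simpa [Finset.mem_range, Nat.lt_succ_iff] using hk
          simp [hkN])]
        apply Finset.sum_congr rfl
        intro k hk
        have hkN : k ≤ N := by simpa [Finset.mem_range, Nat.lt_succ_iff] using hk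
        rw [if_pos hkN, hxsq2 k]
      rw [hts, ← Finset.mul_sum]
      have hZsum : ∑ k ∈ Finset.range (N+1), (Z k ω)^2 ≤ (4*D+12)*A := by
        have h14 : (1/4) * ∑ k ∈ Finset.range (N+1), (Z k ω)^2 < (D+3)*A := by
          rw [Finset.mul_sum]
          exact hhead
        linarith
      have hRHS : ((D+1)*A)^(1+2*α)/T * ((4*D+12)*A)
          = (Real.sqrt ((D+1)^(1+2*α)*(4*D+12)) * T^((1/2+α-β)/(1+2*β)))^2 := by
        rw [mul_pow, Real.sq_sqrt hKsq.le, sq_rpow T _ hT0.le,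
          Real.mul_rpow hD1.le hA0.le, hAdef, ← Real.rpow_mul hT0.le]
        have hTpow : T^((1/(1+2*β))*(1+2*α)) * T^(1/(1+2*β)) / T
            = T^(2*((1/2+α-β)/(1+2*β))) := by
          rw [← Real.rpow_add hT0, show T^((1/(1+2*β))*(1+2*α) + 1/(1+2*β))/T
            = T^((1/(1+2*β))*(1+2*α) + 1/(1+2*β))/T^(1:ℝ) by rw [Real.rpow_one],
            ← Real.rpow_sub hT0]
          congr 1
          field_simp
          try ring
        rw [← hTpow]
        ring
      calc (E ω)^(1+2*α)/T * ∑ k ∈ Finset.range (N+1), (Z k ω)^2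
          ≤ ((D+1)*A)^(1+2*α)/T * ((4*D+12)*A) := by
            apply mul_le_mul hLle hZsum (Finset.sum_nonneg fun k _ => sq_nonneg _)
              (by positivity)
        _ = _ := hRHS
    · have hgg : (fun k => (if k ≤ N then 0 else x k)^2)
          = fun k => (E ω)^(1+2*α)/T *
            ((if k ≤ N then 0 else ((k:ℝ)+1)^(-(1+2*α))) * (Z k ω)^2) := by
        funext k
        by_cases hk : k ≤ N
        · simp [hk]
        · simp only [if_neg hk]
          rw [hxsq k]
      rw [hgg]
      apply Summable.mul_left
      apply summable_of_sum_range_le (c := uu) (fun k => by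
        split <;> positivity)
      intro n
      have h := htail n
      have hqa : ∀ k, aa k * (Z k ω)^2
          = lam * ((if k ≤ N then 0 else ((k:ℝ)+1)^(-(1+2*α))) * (Z k ω)^2) := by
        intro k
        rw [haadef]
        dsimp only
        by_cases hk : k ≤ N
        · simp [hk]
        · simp only [if_neg hk]
          ring
      rw [Finset.sum_congr rfl (fun k _ => hqa k), ← Finset.mul_sum] at h
      nlinarith [h, hlam0]
    · have hgg : (fun k => (if k ≤ N then 0 else x k)^2)
          = fun k => (E ω)^(1+2*α)/T *
            ((if k ≤ N then 0 else ((k:ℝ)+1)^(-(1+2*α))) * (Z k ω)^2) := by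
        funext k
        by_cases hk : k ≤ N
        · simp [hk]
        · simp only [if_neg hk]
          rw [hxsq k]
      have hq0 : ∀ k, 0 ≤ (if k ≤ N then 0 else ((k:ℝ)+1)^(-(1+2*α))) * (Z k ω)^2 := by
        intro k
        split <;> positivity
      have hqa : ∀ k, aa k * (Z k ω)^2
          = lam * ((if k ≤ N then 0 else ((k:ℝ)+1)^(-(1+2*α))) * (Z k ω)^2) := by
        intro k
        rw [haadef]
        dsimp only
        by_cases hk : k ≤ N
        · simp [hk]
        · simp only [if_neg hk]
          ring
      have hqle : ∀ n, ∑ k ∈ Finset.range n,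
          (if k ≤ N then 0 else ((k:ℝ)+1)^(-(1+2*α))) * (Z k ω)^2 ≤ uu := by
        intro n
        have h := htail n
        rw [Finset.sum_congr rfl (fun k _ => hqa k), ← Finset.mul_sum] at h
        nlinarith [h, hlam0]
      have hqtsum : (∑' k, (if k ≤ N then 0 else ((k:ℝ)+1)^(-(1+2*α))) * (Z k ω)^2) ≤ uu :=
        Real.tsum_le_of_sum_range_le hq0 hqle
      have hRHS2 : ((D+1)*A)^(1+2*α)/T * uu
          = (Real.sqrt (4*(D+1)^(1+2*α)*(D+1+Cα)) * T^(-β/(1+2*β)))^2 := by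
        rw [mul_pow, Real.sq_sqrt hcsq.le, sq_rpow T _ hT0.le, huudef,
          Real.mul_rpow hD1.le hA0.le, hAdef, ← Real.rpow_mul hT0.le,
          ← Real.rpow_mul hT0.le]
        have hTpow2 : T^((1/(1+2*β))*(1+2*α)) * T^((1/(1+2*β))*(-(2*α))) / T
            = T^(2*(-β/(1+2*β))) := by
          rw [← Real.rpow_add hT0,
            show T^((1/(1+2*β))*(1+2*α) + (1/(1+2*β))*(-(2*α)))/T
              = T^((1/(1+2*β))*(1+2*α) + (1/(1+2*β))*(-(2*α)))/T^(1:ℝ) by rw [Real.rpow_one],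
            ← Real.rpow_sub hT0]
          congr 1
          field_simp
          try ring
        rw [← hTpow2]
        ring
      rw [hgg, tsum_mul_left]
      calc (E ω)^(1+2*α)/T * ∑' k, (if k ≤ N then 0 else ((k:ℝ)+1)^(-(1+2*α))) * (Z k ω)^2
          ≤ ((D+1)*A)^(1+2*α)/T * uu := by
            apply mul_le_mul hLle hqtsum (tsum_nonneg hq0) (by positivity)
        _ = _ := hRHS2
  -- probability bounds
  have hB1 : P B1 = 0 := exp_neg_prob hEmeas hElaw
  have hB2 : P B2 ≤ ENNReal.ofReal (Real.exp (-((D+1)*A))) := by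
    exact exp_tail hEmeas hElaw (by positivity)
  have hB3 : P B3 ≤ ENNReal.ofReal (Real.exp (-((D+1)*A))) := by
    have h := chernoff P Z hmeas hlaw hindep (Finset.range (N+1)) (fun _ => 1/4)
      (fun _ => by norm_num) (fun _ => le_refl _) ((D+3)*A)
    refine le_trans h (ENNReal.ofReal_le_ofReal (Real.exp_le_exp.mpr ?_))
    rw [Finset.sum_const, Finset.card_range, nsmul_eq_mul]
    push_cast
    linarith [hNA2, hA1]
  have hB4 : P B4 ≤ ENNReal.ofReal (Real.exp (-((D+1)*A))) := by
    rw [hB4def]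
    have hmono : Monotone (fun n => {ω | lam*uu ≤ ∑ k ∈ Finset.range n, aa k * (Z k ω)^2}) := by
      intro n m hnm ω hω
      simp only [mem_setOf_eq] at *
      refine le_trans hω (Finset.sum_le_sum_of_subset_of_nonneg
        (Finset.range_subset_range.mpr hnm) ?_)
      intro k _ _
      exact mul_nonneg (haa0 k) (sq_nonneg _)
    rw [hmono.measure_iUnion]
    apply iSup_le
    intro n
    refine le_trans (chernoff P Z hmeas hlaw hindep (Finset.range n) aa haa0 haa1 (lam*uu)) ?_
    apply ENNReal.ofReal_le_ofReal
    apply Real.exp_le_exp.mpr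
    have hlamuu : (D+1+Cα)*A ≤ lam*uu := by
      have hlamge : A^(1+2*α)/4 ≤ lam := by
        rw [hlamdef]
        have h := Real.rpow_le_rpow hA0.le (show A ≤ (N:ℝ)+2 by linarith)
          (show (0:ℝ) ≤ 1+2*α by linarith)
        linarith
      have hAA : A^(1+2*α) * A^(-(2*α)) = A := by
        rw [← Real.rpow_add hA0]
        norm_num
      calc (D+1+Cα)*A = (A^(1+2*α)/4) * (4*(D+1+Cα)*A^(-(2*α))) := by
            rw [show (A^(1+2*α)/4) * (4*(D+1+Cα)*A^(-(2*α)))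
              = (D+1+Cα)*(A^(1+2*α) * A^(-(2*α))) by ring, hAA]
        _ ≤ lam * uu := by
            rw [huudef]
            exact mul_le_mul_of_nonneg_right hlamge (by positivity)
    have hsum : 2 * ∑ k ∈ Finset.range n, aa k ≤ Cα * A := by
      have hfil : ∑ k ∈ Finset.range n, aa k
          = lam * ∑ k ∈ (Finset.range n).filter (fun k => ¬ k ≤ N),
              ((k:ℝ)+1)^(-(1+2*α)) := by
        rw [Finset.sum_filter, Finset.mul_sum]
        apply Finset.sum_congr rfl
        intro k _
        by_cases hk : k ≤ N <;> simp [haadef, hk]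
      have hwb := tail_weight_sum (p := 2*α) (by positivity) (N+1)
        (Nat.le_add_left 1 N) ((Finset.range n).filter (fun k => ¬ k ≤ N))
        (by
          intro k hk
          have := (Finset.mem_filter.mp hk).2
          omega)
      have hNcast : (((N+1:ℕ)):ℝ) = (N:ℝ)+1 := by push_cast; ring
      rw [hNcast] at hwb
      have hB0 : (0:ℝ) < (N:ℝ)+1 := by positivity
      have e2 : ((N:ℝ)+2)^(1+2*α) = ((N:ℝ)+2) * ((N:ℝ)+2)^(2*α) := by
        rw [Real.rpow_add (by positivity), Real.rpow_one]
      have e3 : ((N:ℝ)+2)^(2*α) ≤ 2^(2*α) * ((N:ℝ)+1)^(2*α) := by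
        rw [← Real.mul_rpow (by norm_num) (by positivity)]
        exact Real.rpow_le_rpow (by positivity) (by linarith) (by positivity)
      have e4 : ((N:ℝ)+1)^(2*α) * ((N:ℝ)+1)^(-(2*α)) = 1 := by
        rw [← Real.rpow_add hB0]
        norm_num
      have e5 : (N:ℝ)+2 ≤ 4*A := by linarith [hNA2, hA1]
      have hw0 : 0 ≤ ∑ k ∈ (Finset.range n).filter (fun k => ¬ k ≤ N),
          ((k:ℝ)+1)^(-(1+2*α)) := by
        apply Finset.sum_nonneg
        intro k _
        positivity
      calc 2 * ∑ k ∈ Finset.range n, aa k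
          = 2 * lam * ∑ k ∈ (Finset.range n).filter (fun k => ¬ k ≤ N),
              ((k:ℝ)+1)^(-(1+2*α)) := by rw [hfil]; ring
        _ ≤ 2 * lam * (((N:ℝ)+1)^(-(2*α))/(2*α)) := by
            apply mul_le_mul_of_nonneg_left hwb (by positivity)
        _ = ((N:ℝ)+2)^(1+2*α) * ((N:ℝ)+1)^(-(2*α)) / (4*α) := by
            rw [hlamdef]; ring
        _ = ((N:ℝ)+2) * (((N:ℝ)+2)^(2*α) * ((N:ℝ)+1)^(-(2*α))) / (4*α) := by
            rw [e2]; ring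
        _ ≤ ((N:ℝ)+2) * ((2^(2*α) * ((N:ℝ)+1)^(2*α)) * ((N:ℝ)+1)^(-(2*α))) / (4*α) := by
            have hnn : (0:ℝ) ≤ ((N:ℝ)+1)^(-(2*α)) := by positivity
            gcongr
        _ = ((N:ℝ)+2) * 2^(2*α) / (4*α) := by
            rw [mul_assoc ((2:ℝ)^(2*α)), e4, mul_one]
        _ ≤ (4*A) * 2^(2*α) / (4*α) := by
            gcongr
        _ = Cα * A := by rw [hCαdef]; ring
    linarith [hlamuu, hsum]
  calc P _ ≤ P (B1 ∪ B2 ∪ B3 ∪ B4) := measure_mono hincl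
    _ ≤ P B1 + P B2 + P B3 + P B4 := by
        calc P (B1 ∪ B2 ∪ B3 ∪ B4) ≤ P (B1 ∪ B2 ∪ B3) + P B4 := measure_union_le _ _
          _ ≤ (P (B1 ∪ B2) + P B3) + P B4 := by gcongr; exact measure_union_le _ _
          _ ≤ ((P B1 + P B2) + P B3) + P B4 := by gcongr; exact measure_union_le _ _
    _ ≤ ENNReal.ofReal (2 * Real.exp (-D * A)) := by
        rw [hB1, zero_add]
        calc P B2 + P B3 + P B4
            ≤ ENNReal.ofReal (Real.exp (-((D+1)*A))) + ENNReal.ofReal (Real.exp (-((D+1)*A)))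
              + ENNReal.ofReal (Real.exp (-((D+1)*A))) := by gcongr
          _ = ENNReal.ofReal (Real.exp (-((D+1)*A)) + Real.exp (-((D+1)*A))
              + Real.exp (-((D+1)*A))) := by
              rw [← ENNReal.ofReal_add (Real.exp_nonneg _) (Real.exp_nonneg _),
                ← ENNReal.ofReal_add (by positivity) (Real.exp_nonneg _)]
          _ ≤ ENNReal.ofReal (2 * Real.exp (-D * A)) := by
              apply ENNReal.ofReal_le_ofReal
              have hsplit : Real.exp (-((D+1)*A)) = Real.exp (-D*A) * Real.exp (-A) := by
                rw [← Real.exp_add]; ring_nf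
              have hexpA : Real.exp (-A) ≤ 1/2 := by
                have h2 : (2:ℝ) ≤ Real.exp 1 := by
                  have := Real.add_one_le_exp 1
                  linarith
                have h3 : (Real.exp 1)⁻¹ ≤ 1/2 := by
                  rw [inv_le_comm₀ (Real.exp_pos 1) (by norm_num)]
                  linarith
                calc Real.exp (-A) ≤ Real.exp (-1) := Real.exp_le_exp.mpr (by linarith)
                  _ = (Real.exp 1)⁻¹ := Real.exp_neg 1
                  _ ≤ 1/2 := h3
              nlinarith [Real.exp_pos (-D*A), Real.exp_pos (-A)]
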